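/- Let p ≥ 1, n ≥ 1, and let X = {X_1,...,X_r} be a set partition of [n] into r blocks each of cardinality s (so n = r·s). Then the number of (p+1)-tuples (σ_1,...,σ_{p+1}) of pairwise commuting permutations of [n] such that ⟨σ_1,...,σ_{p+1}⟩ acts transitively on [n] and such that the set of orbits of ⟨σ_1,...,σ_p⟩ is exactly X equals A(p,s,1) · (r−1)! · (s!)^{r−1} · s. -/

import Mathlib

/-- `A p n k` is the number of `p`-tuples of pairwise commuting permutations of
`{1,…,n}` whose generated subgroup acts on `{1,…,n}` with exactly `k` orbits. -/
noncomputable def A (p n k : ℕ) : ℕ :=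
  Nat.card {σ : Fin p → Equiv.Perm (Fin n) //
    (∀ i j, Commute (σ i) (σ j)) ∧
    Nat.card (MulAction.orbitRel.Quotient
      (Subgroup.closure (Set.range σ)) (Fin n)) = k}

open Subgroup Equiv MulAction

namespace Stmt12Aux

variable {G : Type*} [Group G] {S : Set G}

lemma closure_comm (hS : ∀ a ∈ S, ∀ b ∈ S, Commute a b) {x y : G}
    (hx : x ∈ closure S) (hy : y ∈ closure S) : Commute x y :=
  closure_induction₂ (p := fun a b _ _ => Commute a b) (fun x y hx hy => hS x hx y hy)
    (fun x _ => Commute.one_left x) (fun x _ => Commute.one_right x)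
    (fun _ _ _ _ _ _ h1 h2 => h1.mul_left h2)
    (fun _ _ _ _ _ _ h1 h2 => h1.mul_right h2)
    (fun _ _ _ _ h => h.inv_left) (fun _ _ _ _ h => h.inv_right) hx hy

lemma commute_of_closure {φ : G} (hφ : ∀ g ∈ S, Commute φ g) :
    ∀ g ∈ closure S, Commute φ g := fun g hg =>
  closure_induction (p := fun a _ => Commute φ a) hφ (Commute.one_right φ)
    (fun _ _ _ _ h1 h2 => h1.mul_right h2) (fun _ _ h => h.inv_right) hg

variable {β : Type*}

lemma perm_eq_of_commute {S : Set (Equiv.Perm β)}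
    (htr : ∀ x y : β, ∃ g ∈ closure S, g x = y) {φ ψ : Equiv.Perm β}
    (hφ : ∀ g ∈ closure S, Commute φ g) (hψ : ∀ g ∈ closure S, Commute ψ g)
    {x₀ : β} (h : φ x₀ = ψ x₀) : φ = ψ := by
  ext y
  obtain ⟨g, hg, rfl⟩ := htr x₀ y
  have h1 : φ * g = g * φ := (hφ g hg).eq
  have h2 : ψ * g = g * ψ := (hψ g hg).eq
  calc φ (g x₀) = (φ * g) x₀ := rfl
    _ = g (φ x₀) := by rw [h1]; rfl
    _ = g (ψ x₀) := by rw [h]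
    _ = (ψ * g) x₀ := by rw [h2]; rfl

lemma card_orbitQuot_eq_one_iff {H : Type*} [Group H] [MulAction H β] [Nonempty β] :
    Nat.card (orbitRel.Quotient H β) = 1 ↔ ∀ x y : β, ∃ g : H, g • x = y := by
  rw [Nat.card_eq_one_iff_unique]
  constructor
  · rintro ⟨hsub, -⟩ x y
    have : IsPretransitive H β := (pretransitive_iff_subsingleton_quotient H β).2 hsub
    exact this.exists_smul_eq x y
  · intro h
    have : IsPretransitive H β := ⟨fun x y => h x y⟩
    exact ⟨(pretransitive_iff_subsingleton_quotient H β).1 this, ⟨Quotient.mk'' (Classical.arbitrary β)⟩⟩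

/-- permCongr as a MulEquiv -/
def permMulEquiv {α β : Type*} (e : α ≃ β) : Equiv.Perm α ≃* Equiv.Perm β :=
  { Equiv.permCongr e with
    map_mul' := fun f g => by
      ext z
      simp [Equiv.permCongr_apply, Equiv.Perm.mul_apply] }

@[simp] lemma permMulEquiv_apply {α β : Type*} (e : α ≃ β) (f : Equiv.Perm α) (z : β) :
    permMulEquiv e f z = e (f (e.symm z)) := rfl


section Model

variable {m t : ℕ}

/-- cumulative maps: `G0 F 0 = 1`, `G0 F (k+1) = F k`. -/
def G0 (F : Fin m → Equiv.Perm (Fin (t+1))) : Fin (m+1) → Equiv.Perm (Fin (t+1)) :=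
  Fin.cases 1 F

@[simp] lemma G0_zero (F : Fin m → Equiv.Perm (Fin (t+1))) : G0 F 0 = 1 := rfl

@[simp] lemma G0_succ (F : Fin m → Equiv.Perm (Fin (t+1))) (k : Fin m) :
    G0 F k.succ = F k := Fin.cases_succ _

def Rmap (F : Fin m → Equiv.Perm (Fin (t+1))) (h : Equiv.Perm (Fin (t+1)))
    (j : Fin (m+1)) : Equiv.Perm (Fin (t+1)) :=
  G0 F (j + 1) * (if j = Fin.last m then h else 1) * (G0 F j)⁻¹

def rho (e : Equiv.Perm (Fin (m+1))) (F : Fin m → Equiv.Perm (Fin (t+1)))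
    (h : Equiv.Perm (Fin (t+1))) : Equiv.Perm (Fin (m+1) × Fin (t+1)) :=
  Equiv.prodShear (e.symm.trans ((Equiv.addRight (1 : Fin (m+1))).trans e))
    (fun a => Rmap F h (e.symm a))

lemma rho_apply (e : Equiv.Perm (Fin (m+1))) (F : Fin m → Equiv.Perm (Fin (t+1)))
    (h : Equiv.Perm (Fin (t+1))) (a : Fin (m+1)) (x : Fin (t+1)) :
    rho e F h (a, x) = (e (e.symm a + 1), Rmap F h (e.symm a) x) := rfl

def Phi (e : Equiv.Perm (Fin (m+1))) (F : Fin m → Equiv.Perm (Fin (t+1)))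
    (g : Equiv.Perm (Fin (t+1))) : Equiv.Perm (Fin (m+1) × Fin (t+1)) :=
  Equiv.prodShear (Equiv.refl _)
    (fun a => G0 F (e.symm a) * g * (G0 F (e.symm a))⁻¹)

lemma Phi_apply (e : Equiv.Perm (Fin (m+1))) (F : Fin m → Equiv.Perm (Fin (t+1)))
    (g : Equiv.Perm (Fin (t+1))) (a : Fin (m+1)) (x : Fin (t+1)) :
    Phi e F g (a, x) = (a, (G0 F (e.symm a) * g * (G0 F (e.symm a))⁻¹) x) := rfl

lemma Phi_mul (e : Equiv.Perm (Fin (m+1))) (F : Fin m → Equiv.Perm (Fin (t+1)))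
    (g g' : Equiv.Perm (Fin (t+1))) :
    Phi e F (g * g') = Phi e F g * Phi e F g' := Equiv.ext fun z => by
  rcases z with ⟨a, x⟩
  simp [Phi_apply, Equiv.Perm.mul_apply]

/-- `Phi` as a monoid hom. -/
def PhiHom (e : Equiv.Perm (Fin (m+1))) (F : Fin m → Equiv.Perm (Fin (t+1))) :
    Equiv.Perm (Fin (t+1)) →* Equiv.Perm (Fin (m+1) × Fin (t+1)) :=
  MonoidHom.mk' (Phi e F) (Phi_mul e F)

variable (e : Equiv.Perm (Fin (m+1))) (F : Fin m → Equiv.Perm (Fin (t+1)))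
  (h : Equiv.Perm (Fin (t+1)))

lemma fin_add_one_of_lt {k : ℕ} (hk : k < m) :
    (⟨k, Nat.lt_succ_of_le hk.le⟩ : Fin (m+1)) + 1 = ⟨k+1, Nat.succ_lt_succ hk⟩ := by
  ext
  simp [Fin.add_def, Nat.mod_eq_of_lt (Nat.succ_lt_succ hk)]

lemma rho_pow (he : e 0 = 0) (k : ℕ) (hk : k ≤ m) (y : Fin (t+1)) :
    ((rho e F h)^k) (0, y) = (e ⟨k, Nat.lt_succ_of_le hk⟩, G0 F ⟨k, Nat.lt_succ_of_le hk⟩ y) := by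
  induction k with
  | zero =>
    have h0 : (⟨0, Nat.lt_succ_of_le (Nat.zero_le m)⟩ : Fin (m+1)) = 0 := rfl
    rw [pow_zero]
    rw [h0, he]
    rfl
  | succ k ih =>
    have hk' : k ≤ m := Nat.le_of_succ_le hk
    have hkm : k < m := hk
    rw [pow_succ', Equiv.Perm.mul_apply, ih hk', rho_apply, Equiv.symm_apply_apply]
    have hne : (⟨k, Nat.lt_succ_of_le hk'⟩ : Fin (m+1)) ≠ Fin.last m := by
      intro hEq
      have := congrArg Fin.val hEq
      simp only [Fin.last] at this
      omega
    rw [fin_add_one_of_lt hkm]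
    simp only [Rmap, fin_add_one_of_lt hkm, if_neg hne, mul_one,
      Equiv.Perm.mul_apply, Equiv.Perm.inv_def, Equiv.symm_apply_apply]

lemma rho_pow_top (he : e 0 = 0) (y : Fin (t+1)) :
    ((rho e F h)^(m+1)) (0, y) = (0, h y) := by
  rw [pow_succ', Equiv.Perm.mul_apply, rho_pow e F h he m le_rfl, rho_apply,
    Equiv.symm_apply_apply]
  have hlast : (⟨m, Nat.lt_succ_of_le le_rfl⟩ : Fin (m+1)) = Fin.last m := rfl
  rw [hlast, Fin.last_add_one, he]
  simp [Rmap, Fin.last_add_one, Equiv.Perm.mul_apply]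

lemma phi_comm {g g' : Equiv.Perm (Fin (t+1))} (hc : Commute g g') :
    Commute (Phi e F g) (Phi e F g') := hc.map (PhiHom e F)

lemma Rmap_conj {g : Equiv.Perm (Fin (t+1))} (hc : Commute h g) (j : Fin (m+1)) :
    Rmap F h j * (G0 F j * g * (G0 F j)⁻¹)
      = (G0 F (j+1) * g * (G0 F (j+1))⁻¹) * Rmap F h j := by
  unfold Rmap
  set w := if j = Fin.last m then h else 1 with hw
  have hwg : w * g = g * w := by
    rcases ite_eq_or_eq (j = Fin.last m) h 1 with h' | h' <;> rw [← hw] at h' <;> rw [h']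
    · exact hc.eq
    · simp
  calc G0 F (j+1) * w * (G0 F j)⁻¹ * (G0 F j * g * (G0 F j)⁻¹)
      = G0 F (j+1) * (w * g) * (G0 F j)⁻¹ := by group
    _ = G0 F (j+1) * (g * w) * (G0 F j)⁻¹ := by rw [hwg]
    _ = G0 F (j+1) * g * (G0 F (j+1))⁻¹ * (G0 F (j+1) * w * (G0 F j)⁻¹) := by group

lemma rho_phi_comm {g : Equiv.Perm (Fin (t+1))} (hc : Commute h g) :
    Commute (rho e F h) (Phi e F g) := by
  show _ * _ = _ * _
  refine Equiv.ext fun z => ?_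
  rcases z with ⟨a, x⟩
  rw [Equiv.Perm.mul_apply, Equiv.Perm.mul_apply, Phi_apply, rho_apply, rho_apply,
    Phi_apply, Equiv.symm_apply_apply]
  refine Prod.ext rfl ?_
  have := congrArg (fun (q : Equiv.Perm (Fin (t+1))) => q x) (Rmap_conj F h hc (e.symm a))
  simpa [Equiv.Perm.mul_apply] using this

section Build

variable {p : ℕ} (τ : Fin p → Equiv.Perm (Fin (t+1)))

def bsig : Fin (p+1) → Equiv.Perm (Fin (m+1) × Fin (t+1)) :=
  Fin.lastCases (rho e F h) (fun i => Phi e F (τ i))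

@[simp] lemma bsig_castSucc (i : Fin p) : bsig e F h τ i.castSucc = Phi e F (τ i) := by
  simp [bsig]

@[simp] lemma bsig_last : bsig e F h τ (Fin.last p) = rho e F h := by
  simp [bsig]

lemma bsig_comm (hτc : ∀ i j, Commute (τ i) (τ j)) (hh : h ∈ closure (Set.range τ)) :
    ∀ i j, Commute (bsig e F h τ i) (bsig e F h τ j) := by
  have key : ∀ i : Fin p, Commute (rho e F h) (Phi e F (τ i)) := fun i =>
    rho_phi_comm e F h (closure_comm
      (by rintro a ⟨i, rfl⟩ b ⟨j, rfl⟩; exact hτc i j) hh (subset_closure ⟨i, rfl⟩))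
  intro i j
  induction i using Fin.lastCases with
  | last =>
    induction j using Fin.lastCases with
    | last => exact Commute.refl _
    | cast j => simpa using key j
  | cast i =>
    induction j using Fin.lastCases with
    | last => simpa using (key i).symm
    | cast j => simpa using phi_comm e F (hτc i j)

lemma bsig_closure_castSucc :
    closure (Set.range fun i : Fin p => bsig e F h τ i.castSucc)
      = Subgroup.map (PhiHom e F) (closure (Set.range τ)) := by
  have hr : (Set.range fun i : Fin p => bsig e F h τ i.castSucc)
      = (PhiHom e F) '' (Set.range τ) := by
    ext g
    constructor
    · rintro ⟨i, rfl⟩; exact ⟨τ i, ⟨i, rfl⟩, (bsig_castSucc e F h τ i).symm⟩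
    · rintro ⟨k, ⟨i, rfl⟩, rfl⟩; exact ⟨i, bsig_castSucc e F h τ i⟩
  rw [hr, MonoidHom.map_closure]

lemma bsig_orbit (hτt : ∀ x y : Fin (t+1), ∃ g ∈ closure (Set.range τ), g x = y)
    (z : Fin (m+1) × Fin (t+1)) :
    MulAction.orbit (closure (Set.range fun i : Fin p => bsig e F h τ i.castSucc)) z
      = {w : Fin (m+1) × Fin (t+1) | w.1 = z.1} := by
  rcases z with ⟨a, x⟩
  ext ⟨a', y⟩
  simp only [Set.mem_setOf_eq]
  constructor
  · rintro ⟨⟨g, hg⟩, hgz⟩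
    rw [bsig_closure_castSucc] at hg
    obtain ⟨k, hk, rfl⟩ := hg
    have hz : Phi e F k (a, x) = (a', y) := hgz
    rw [Phi_apply] at hz
    exact (congrArg Prod.fst hz).symm
  · rintro rfl
    obtain ⟨k, hk, hky⟩ := hτt ((G0 F (e.symm a'))⁻¹ x) ((G0 F (e.symm a'))⁻¹ y)
    refine ⟨⟨Phi e F k, ?_⟩, ?_⟩
    · rw [bsig_closure_castSucc]
      exact ⟨k, hk, rfl⟩
    · show Phi e F k (a', x) = (a', y)
      rw [Phi_apply]
      refine Prod.ext rfl ?_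
      show G0 F (e.symm a') (k ((G0 F (e.symm a'))⁻¹ x)) = y
      rw [hky]
      simp

lemma bsig_reach (hτt : ∀ x y : Fin (t+1), ∃ g ∈ closure (Set.range τ), g x = y)
    (he : e 0 = 0) (z : Fin (m+1) × Fin (t+1)) :
    ∃ g ∈ closure (Set.range (bsig e F h τ)),
      g ((0 : Fin (m+1)), (0 : Fin (t+1))) = z := by
  rcases z with ⟨a, x⟩
  have hrho : rho e F h ∈ closure (Set.range (bsig e F h τ)) :=
    subset_closure ⟨Fin.last p, bsig_last e F h τ⟩
  set j := e.symm a with hj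
  obtain ⟨k, hk, hk0⟩ := hτt 0 ((G0 F j)⁻¹ x)
  have hφ : Phi e F k ∈ closure (Set.range (bsig e F h τ)) := by
    have h1 : Phi e F k ∈ closure (Set.range fun i : Fin p => bsig e F h τ i.castSucc) := by
      rw [bsig_closure_castSucc]; exact ⟨k, hk, rfl⟩
    refine closure_mono ?_ h1
    rintro g ⟨i, rfl⟩; exact ⟨i.castSucc, rfl⟩
  refine ⟨(rho e F h)^(j.val) * Phi e F k, mul_mem (pow_mem hrho _) hφ, ?_⟩
  have he' : e.symm 0 = 0 := (Equiv.symm_apply_eq e).2 he.symm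
  rw [Equiv.Perm.mul_apply, Phi_apply, he']
  simp only [G0_zero, one_mul, mul_one, inv_one, Equiv.Perm.one_apply]
  show ((rho e F h)^(j.val)) (0, k 0) = (a, x)
  rw [hk0, rho_pow e F h he j.val (Nat.lt_succ_iff.mp j.isLt)]
  have hjj : (⟨j.val, Nat.lt_succ_of_le (Nat.lt_succ_iff.mp j.isLt)⟩ : Fin (m+1)) = j := by
    ext; rfl
  rw [hjj]
  refine Prod.ext ?_ ?_
  · show e j = a; rw [hj, Equiv.apply_symm_apply]
  · simp

lemma bsig_trans (hτt : ∀ x y : Fin (t+1), ∃ g ∈ closure (Set.range τ), g x = y)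
    (he : e 0 = 0) :
    ∀ z w : Fin (m+1) × Fin (t+1), ∃ g ∈ closure (Set.range (bsig e F h τ)), g z = w := by
  intro z w
  obtain ⟨g1, hg1, hg1z⟩ := bsig_reach e F h τ hτt he z
  obtain ⟨g2, hg2, hg2w⟩ := bsig_reach e F h τ hτt he w
  refine ⟨g2 * g1⁻¹, mul_mem hg2 (inv_mem hg1), ?_⟩
  rw [Equiv.Perm.mul_apply, ← hg1z, Equiv.Perm.inv_def, Equiv.symm_apply_apply, hg2w]

end Build

section Extract

variable {p : ℕ} (σ : Fin (p+1) → Equiv.Perm (Fin (m+1) × Fin (t+1)))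

/-- first coordinates preserved by the subgroup generated by the first `p` perms -/
lemma ext_fst
    (horb : ∀ z, MulAction.orbit (closure (Set.range fun i : Fin p => σ i.castSucc)) z
      = {w : Fin (m+1) × Fin (t+1) | w.1 = z.1})
    {g : Equiv.Perm (Fin (m+1) × Fin (t+1))}
    (hg : g ∈ closure (Set.range fun i : Fin p => σ i.castSucc))
    (z : Fin (m+1) × Fin (t+1)) : (g z).1 = z.1 := by
  have : g z ∈ MulAction.orbit (closure (Set.range fun i : Fin p => σ i.castSucc)) z :=
    ⟨⟨g, hg⟩, rfl⟩
  rw [horb z] at this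
  exact this

lemma ext_row
    (horb : ∀ z, MulAction.orbit (closure (Set.range fun i : Fin p => σ i.castSucc)) z
      = {w : Fin (m+1) × Fin (t+1) | w.1 = z.1})
    (z w : Fin (m+1) × Fin (t+1)) (hzw : w.1 = z.1) :
    ∃ g ∈ closure (Set.range fun i : Fin p => σ i.castSucc), g z = w := by
  have : w ∈ MulAction.orbit (closure (Set.range fun i : Fin p => σ i.castSucc)) z := by
    rw [horb z]; exact hzw
  obtain ⟨⟨g, hg⟩, hgz⟩ := this
  exact ⟨g, hg, hgz⟩

lemma ext_rho_comm (hcomm : ∀ i j, Commute (σ i) (σ j))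
    {g : Equiv.Perm (Fin (m+1) × Fin (t+1))}
    (hg : g ∈ closure (Set.range fun i : Fin p => σ i.castSucc)) :
    Commute (σ (Fin.last p)) g := by
  refine commute_of_closure ?_ g hg
  rintro g' ⟨i, rfl⟩
  exact hcomm (Fin.last p) i.castSucc

/-- the induced map on rows -/
def piFun : Fin (m+1) → Fin (m+1) := fun a => (σ (Fin.last p) (a, 0)).1

lemma ext_rho_fst (hcomm : ∀ i j, Commute (σ i) (σ j))
    (horb : ∀ z, MulAction.orbit (closure (Set.range fun i : Fin p => σ i.castSucc)) z
      = {w : Fin (m+1) × Fin (t+1) | w.1 = z.1})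
    (z : Fin (m+1) × Fin (t+1)) : (σ (Fin.last p) z).1 = piFun σ z.1 := by
  rcases z with ⟨a, y⟩
  obtain ⟨g, hg, hgz⟩ := ext_row σ horb (a, 0) (a, y) rfl
  have hc := (ext_rho_comm σ hcomm hg).eq
  have : σ (Fin.last p) (g (a, 0)) = g (σ (Fin.last p) (a, 0)) := by
    have h1 := congrArg (fun q : Equiv.Perm (Fin (m+1) × Fin (t+1)) => q (a, 0)) hc
    simpa [Equiv.Perm.mul_apply] using h1
  rw [hgz] at this
  rw [this, ext_fst σ horb hg]
  rfl

lemma ext_pi_inj (hcomm : ∀ i j, Commute (σ i) (σ j))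
    (horb : ∀ z, MulAction.orbit (closure (Set.range fun i : Fin p => σ i.castSucc)) z
      = {w : Fin (m+1) × Fin (t+1) | w.1 = z.1}) :
    Function.Injective (piFun σ) := by
  intro a a' hpi
  obtain ⟨g, hg, hgz⟩ := ext_row σ horb (σ (Fin.last p) (a, 0)) (σ (Fin.last p) (a', 0))
    (by rw [ext_rho_fst σ hcomm horb, ext_rho_fst σ hcomm horb]; exact hpi.symm)
  have hc := (ext_rho_comm σ hcomm hg).eq
  have hsw : σ (Fin.last p) (g (a, 0)) = g (σ (Fin.last p) (a, 0)) := by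
    have h1 := congrArg (fun q : Equiv.Perm (Fin (m+1) × Fin (t+1)) => q (a, 0)) hc
    simpa [Equiv.Perm.mul_apply] using h1
  rw [hgz] at hsw
  have hga : g (a, 0) = (a', 0) := (σ (Fin.last p)).injective hsw
  have := ext_fst σ horb hg (a, 0)
  rw [hga] at this
  exact this.symm

lemma ext_rho_pow_fst (hcomm : ∀ i j, Commute (σ i) (σ j))
    (horb : ∀ z, MulAction.orbit (closure (Set.range fun i : Fin p => σ i.castSucc)) z
      = {w : Fin (m+1) × Fin (t+1) | w.1 = z.1})
    (k : ℕ) (z : Fin (m+1) × Fin (t+1)) :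
    (((σ (Fin.last p))^k) z).1 = (piFun σ)^[k] z.1 := by
  induction k with
  | zero => simp
  | succ k ih =>
    rw [pow_succ', Equiv.Perm.mul_apply, ext_rho_fst σ hcomm horb, ih,
      Function.iterate_succ_apply']

lemma ext_pi_reach (hcomm : ∀ i j, Commute (σ i) (σ j))
    (htrans : ∀ z w : Fin (m+1) × Fin (t+1), ∃ g ∈ closure (Set.range σ), g z = w)
    (horb : ∀ z, MulAction.orbit (closure (Set.range fun i : Fin p => σ i.castSucc)) z
      = {w : Fin (m+1) × Fin (t+1) | w.1 = z.1})
    (a : Fin (m+1)) : ∃ k : ℕ, (piFun σ)^[k] 0 = a := by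
  classical
  -- there is a positive period for 0
  have hne : ¬ Function.Injective (fun k : Fin (m+2) => (piFun σ)^[k.val] 0) := by
    intro hinj
    have := Fintype.card_le_of_injective _ hinj
    simp at this
  have hper : ∃ d : ℕ, 0 < d ∧ (piFun σ)^[d] 0 = 0 := by
    rw [Function.not_injective_iff] at hne
    obtain ⟨i, j, hij, hne'⟩ := hne
    have key : ∀ i' j' : Fin (m+2), (piFun σ)^[i'.val] 0 = (piFun σ)^[j'.val] 0 →
        i'.val < j'.val → ∃ d, 0 < d ∧ (piFun σ)^[d] 0 = 0 := by
      intro i' j' hEq hlt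
      refine ⟨j'.val - i'.val, by omega, ?_⟩
      have h2 : (piFun σ)^[i'.val] ((piFun σ)^[j'.val - i'.val] 0)
          = (piFun σ)^[i'.val] 0 := by
        rw [← Function.iterate_add_apply]
        have h3 : i'.val + (j'.val - i'.val) = j'.val := by omega
        rw [h3]; exact hEq.symm
      exact ((ext_pi_inj σ hcomm horb).iterate i'.val) h2
    rcases Nat.lt_or_ge i.val j.val with hlt | hge
    · exact key i j hij hlt
    · have hlt : j.val < i.val :=
        lt_of_le_of_ne hge (fun hEq => hne' (Fin.ext hEq.symm))
      exact key j i hij.symm hlt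
  -- invariant set argument
  set S : Set (Fin (m+1)) := {a | ∃ k : ℕ, (piFun σ)^[k] 0 = a} with hS
  have hiff : ∀ g ∈ closure (Set.range σ), ∀ z : Fin (m+1) × Fin (t+1),
      z.1 ∈ S ↔ (g z).1 ∈ S := by
    intro g hg
    induction hg using closure_induction with
    | mem g' hg' =>
      obtain ⟨i, rfl⟩ := hg'
      induction i using Fin.lastCases with
      | last =>
        intro z
        rw [ext_rho_fst σ hcomm horb]
        constructor
        · rintro ⟨k, hk⟩
          exact ⟨k+1, by rw [Function.iterate_succ_apply', hk]⟩
        · rintro ⟨k, hk⟩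
          obtain ⟨d, hd0, hd⟩ := hper
          rcases k with _ | k'
          · refine ⟨d - 1, ?_⟩
            apply ext_pi_inj σ hcomm horb
            have h1 : piFun σ ((piFun σ)^[d-1] 0) = (piFun σ)^[d] 0 := by
              have h2 := (Function.iterate_succ_apply' (piFun σ) (d-1) 0).symm
              rw [h2]
              congr 1
              omega
            rw [h1, hd]
            exact hk
          · refine ⟨k', ?_⟩
            apply ext_pi_inj σ hcomm horb
            rw [Function.iterate_succ_apply'] at hk
            exact hk
      | cast i =>
        intro z
        rw [ext_fst σ horb (subset_closure ⟨i, rfl⟩) z]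
    | one => intro z; simp
    | mul g₁ g₂ hg₁ hg₂ ih₁ ih₂ =>
      intro z
      rw [ih₂ z, Equiv.Perm.mul_apply]
      exact ih₁ (g₂ z)
    | inv g' hg' ih =>
      intro z
      have := ih (g'⁻¹ z)
      rw [Equiv.Perm.inv_def, Equiv.apply_symm_apply] at this
      exact this.symm
  obtain ⟨g, hg, hgz⟩ := htrans ((0 : Fin (m+1)), (0 : Fin (t+1))) (a, 0)
  have h0 : ((0 : Fin (m+1)), (0 : Fin (t+1))).1 ∈ S := ⟨0, rfl⟩
  have := (hiff g hg _).mp h0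
  rw [hgz] at this
  exact this

lemma ext_per (hcomm : ∀ i j, Commute (σ i) (σ j))
    (horb : ∀ z, MulAction.orbit (closure (Set.range fun i : Fin p => σ i.castSucc)) z
      = {w : Fin (m+1) × Fin (t+1) | w.1 = z.1}) :
    ∃ d : ℕ, 0 < d ∧ d ≤ m+1 ∧ (piFun σ)^[d] 0 = 0 := by
  have hne : ¬ Function.Injective (fun k : Fin (m+2) => (piFun σ)^[k.val] 0) := by
    intro hinj
    have := Fintype.card_le_of_injective _ hinj
    simp at this
  rw [Function.not_injective_iff] at hne
  obtain ⟨i, j, hij, hne'⟩ := hne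
  have key : ∀ i' j' : Fin (m+2), (piFun σ)^[i'.val] 0 = (piFun σ)^[j'.val] 0 →
      i'.val < j'.val → ∃ d, 0 < d ∧ d ≤ m+1 ∧ (piFun σ)^[d] 0 = 0 := by
    intro i' j' hEq hlt
    refine ⟨j'.val - i'.val, by omega, by have := j'.isLt; omega, ?_⟩
    have h2 : (piFun σ)^[i'.val] ((piFun σ)^[j'.val - i'.val] 0)
        = (piFun σ)^[i'.val] 0 := by
      rw [← Function.iterate_add_apply]
      have h3 : i'.val + (j'.val - i'.val) = j'.val := by omega
      rw [h3]; exact hEq.symm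
    exact ((ext_pi_inj σ hcomm horb).iterate i'.val) h2
  rcases Nat.lt_or_ge i.val j.val with hlt | hge
  · exact key i j hij hlt
  · have hlt : j.val < i.val :=
      lt_of_le_of_ne hge (fun hEq => hne' (Fin.ext hEq.symm))
    exact key j i hij.symm hlt

lemma ext_u_surj (hcomm : ∀ i j, Commute (σ i) (σ j))
    (htrans : ∀ z w : Fin (m+1) × Fin (t+1), ∃ g ∈ closure (Set.range σ), g z = w)
    (horb : ∀ z, MulAction.orbit (closure (Set.range fun i : Fin p => σ i.castSucc)) z
      = {w : Fin (m+1) × Fin (t+1) | w.1 = z.1}) :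
    Function.Surjective (fun j : Fin (m+1) => (piFun σ)^[j.val] 0) := by
  obtain ⟨d, hd0, hdm, hd⟩ := ext_per σ hcomm horb
  intro a
  obtain ⟨k, hk⟩ := ext_pi_reach σ hcomm htrans horb a
  have hmod : ∀ q rr, (piFun σ)^[rr + q * d] 0 = (piFun σ)^[rr] 0 := by
    intro q
    induction q with
    | zero => simp
    | succ q ih =>
      intro rr
      have hh : rr + (q+1)*d = (rr + q*d) + d := by ring
      rw [hh, Function.iterate_add_apply, hd, ih rr]
  have hklt : k % d < m + 1 := by
    have := Nat.mod_lt k hd0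
    omega
  refine ⟨⟨k % d, hklt⟩, ?_⟩
  show (piFun σ)^[k % d] 0 = a
  have hkeq : k % d + (k / d) * d = k := Nat.mod_add_div' k d
  calc (piFun σ)^[k % d] 0 = (piFun σ)^[k % d + (k/d)*d] 0 := (hmod (k/d) (k%d)).symm
    _ = a := by rw [hkeq]; exact hk

lemma ext_pi_top (hcomm : ∀ i j, Commute (σ i) (σ j))
    (htrans : ∀ z w : Fin (m+1) × Fin (t+1), ∃ g ∈ closure (Set.range σ), g z = w)
    (horb : ∀ z, MulAction.orbit (closure (Set.range fun i : Fin p => σ i.castSucc)) z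
      = {w : Fin (m+1) × Fin (t+1) | w.1 = z.1}) :
    (piFun σ)^[m+1] 0 = 0 := by
  have husurj := ext_u_surj σ hcomm htrans horb
  have huinj : Function.Injective (fun j : Fin (m+1) => (piFun σ)^[j.val] 0) :=
    Finite.injective_iff_surjective.mpr husurj
  obtain ⟨d, hd0, hdm, hd⟩ := ext_per σ hcomm horb
  rcases Nat.lt_or_ge d (m+1) with hlt | hge
  · exfalso
    have : (⟨d, hlt⟩ : Fin (m+1)) = ⟨0, Nat.succ_pos m⟩ := huinj (by simpa using hd)
    have := congrArg Fin.val this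
    simp at this
    omega
  · have hdd : d = m + 1 := by omega
    subst hdd; exact hd

def gexFun (k : ℕ) : Fin (t+1) → Fin (t+1) :=
  fun y => (((σ (Fin.last p))^k) (0, y)).2

lemma ext_rho_pow_eq (hcomm : ∀ i j, Commute (σ i) (σ j))
    (horb : ∀ z, MulAction.orbit (closure (Set.range fun i : Fin p => σ i.castSucc)) z
      = {w : Fin (m+1) × Fin (t+1) | w.1 = z.1}) (k : ℕ) (y : Fin (t+1)) :
    ((σ (Fin.last p))^k) (0, y) = ((piFun σ)^[k] 0, gexFun σ k y) :=
  Prod.ext (ext_rho_pow_fst σ hcomm horb k (0, y)) rfl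

lemma ext_gex_inj (hcomm : ∀ i j, Commute (σ i) (σ j))
    (horb : ∀ z, MulAction.orbit (closure (Set.range fun i : Fin p => σ i.castSucc)) z
      = {w : Fin (m+1) × Fin (t+1) | w.1 = z.1}) (k : ℕ) :
    Function.Injective (gexFun σ k) := by
  intro y y' hy
  have h1 : ((σ (Fin.last p))^k) (0, y) = ((σ (Fin.last p))^k) (0, y') := by
    rw [ext_rho_pow_eq σ hcomm horb, ext_rho_pow_eq σ hcomm horb, hy]
  have := ((σ (Fin.last p))^k).injective h1
  exact (Prod.mk.injEq _ _ _ _).mp this |>.2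

noncomputable def gexE (hcomm : ∀ i j, Commute (σ i) (σ j))
    (horb : ∀ z, MulAction.orbit (closure (Set.range fun i : Fin p => σ i.castSucc)) z
      = {w : Fin (m+1) × Fin (t+1) | w.1 = z.1}) (k : ℕ) : Equiv.Perm (Fin (t+1)) :=
  Equiv.ofBijective (gexFun σ k)
    (Finite.injective_iff_bijective.mp (ext_gex_inj σ hcomm horb k))

@[simp] lemma gexE_apply (hcomm) (horb) (k : ℕ) (y : Fin (t+1)) :
    gexE σ hcomm horb k y = gexFun σ k y := rfl

def texFun (i : Fin p) : Fin (t+1) → Fin (t+1) :=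
  fun x => (σ i.castSucc (0, x)).2

lemma ext_tex_eq
    (horb : ∀ z, MulAction.orbit (closure (Set.range fun i : Fin p => σ i.castSucc)) z
      = {w : Fin (m+1) × Fin (t+1) | w.1 = z.1}) (i : Fin p) (x : Fin (t+1)) :
    σ i.castSucc (0, x) = ((0 : Fin (m+1)), texFun σ i x) :=
  Prod.ext (ext_fst σ horb (subset_closure ⟨i, rfl⟩) _) rfl

lemma ext_tex_inj
    (horb : ∀ z, MulAction.orbit (closure (Set.range fun i : Fin p => σ i.castSucc)) z
      = {w : Fin (m+1) × Fin (t+1) | w.1 = z.1}) (i : Fin p) :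
    Function.Injective (texFun σ i) := by
  intro x x' hx
  have h1 : σ i.castSucc (0, x) = σ i.castSucc (0, x') := by
    rw [ext_tex_eq σ horb, ext_tex_eq σ horb, hx]
  have := (σ i.castSucc).injective h1
  exact (Prod.mk.injEq _ _ _ _).mp this |>.2

noncomputable def texE
    (horb : ∀ z, MulAction.orbit (closure (Set.range fun i : Fin p => σ i.castSucc)) z
      = {w : Fin (m+1) × Fin (t+1) | w.1 = z.1}) (i : Fin p) : Equiv.Perm (Fin (t+1)) :=
  Equiv.ofBijective (texFun σ i)
    (Finite.injective_iff_bijective.mp (ext_tex_inj σ horb i))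

@[simp] lemma texE_apply (horb) (i : Fin p) (x : Fin (t+1)) :
    texE σ horb i x = texFun σ i x := rfl

lemma ext_tex_comm (hcomm : ∀ i j, Commute (σ i) (σ j))
    (horb : ∀ z, MulAction.orbit (closure (Set.range fun i : Fin p => σ i.castSucc)) z
      = {w : Fin (m+1) × Fin (t+1) | w.1 = z.1}) (i j : Fin p) :
    Commute (texE σ horb i) (texE σ horb j) := by
  show _ * _ = _ * _
  refine Equiv.ext fun x => ?_
  have hc := (hcomm i.castSucc j.castSucc).eq
  have h1 := congrArg
    (fun q : Equiv.Perm (Fin (m+1) × Fin (t+1)) => q ((0 : Fin (m+1)), x)) hc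
  simp only [Equiv.Perm.mul_apply] at h1
  rw [ext_tex_eq σ horb j x, ext_tex_eq σ horb i, ext_tex_eq σ horb i x,
    ext_tex_eq σ horb j] at h1
  have h2 := (Prod.mk.injEq _ _ _ _).mp h1 |>.2
  simpa [Equiv.Perm.mul_apply] using h2

lemma ext_row_restrict
    (horb : ∀ z, MulAction.orbit (closure (Set.range fun i : Fin p => σ i.castSucc)) z
      = {w : Fin (m+1) × Fin (t+1) | w.1 = z.1}) :
    ∀ g ∈ closure (Set.range fun i : Fin p => σ i.castSucc),
      ∃ k ∈ closure (Set.range (texE σ horb)),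
        ∀ x : Fin (t+1), g ((0 : Fin (m+1)), x) = ((0 : Fin (m+1)), k x) := by
  intro g hg
  induction hg using closure_induction with
  | mem g' hg' =>
    obtain ⟨i, rfl⟩ := hg'
    exact ⟨texE σ horb i, subset_closure ⟨i, rfl⟩, fun x => ext_tex_eq σ horb i x⟩
  | one => exact ⟨1, one_mem _, fun x => rfl⟩
  | mul g₁ g₂ hg₁ hg₂ ih₁ ih₂ =>
    obtain ⟨k₁, hk₁, hk₁x⟩ := ih₁
    obtain ⟨k₂, hk₂, hk₂x⟩ := ih₂
    refine ⟨k₁ * k₂, mul_mem hk₁ hk₂, fun x => ?_⟩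
    rw [Equiv.Perm.mul_apply, hk₂x, hk₁x]
    rfl
  | inv g' hg' ih =>
    obtain ⟨k, hk, hkx⟩ := ih
    refine ⟨k⁻¹, inv_mem hk, fun x => ?_⟩
    have h2 : g' (0, k⁻¹ x) = ((0 : Fin (m+1)), x) := by
      rw [hkx (k⁻¹ x), Equiv.Perm.inv_def, Equiv.apply_symm_apply]
    rw [← h2, Equiv.Perm.inv_def, Equiv.symm_apply_apply]

lemma ext_tex_trans (hcomm : ∀ i j, Commute (σ i) (σ j))
    (horb : ∀ z, MulAction.orbit (closure (Set.range fun i : Fin p => σ i.castSucc)) z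
      = {w : Fin (m+1) × Fin (t+1) | w.1 = z.1}) :
    ∀ x y : Fin (t+1), ∃ k ∈ closure (Set.range (texE σ horb)), k x = y := by
  intro x y
  obtain ⟨g, hg, hgz⟩ := ext_row σ horb ((0 : Fin (m+1)), x) (0, y) rfl
  obtain ⟨k, hk, hkx⟩ := ext_row_restrict σ horb g hg
  refine ⟨k, hk, ?_⟩
  have := (hkx x).symm.trans hgz
  exact (Prod.mk.injEq _ _ _ _).mp this |>.2

lemma ext_gex_comm_tex (hcomm : ∀ i j, Commute (σ i) (σ j))
    (htrans : ∀ z w : Fin (m+1) × Fin (t+1), ∃ g ∈ closure (Set.range σ), g z = w)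
    (horb : ∀ z, MulAction.orbit (closure (Set.range fun i : Fin p => σ i.castSucc)) z
      = {w : Fin (m+1) × Fin (t+1) | w.1 = z.1}) (i : Fin p) :
    Commute (gexE σ hcomm horb (m+1)) (texE σ horb i) := by
  show _ * _ = _ * _
  refine Equiv.ext fun x => ?_
  have hc := ((hcomm (Fin.last p) i.castSucc).pow_left (m+1)).eq
  have h1 := congrArg
    (fun q : Equiv.Perm (Fin (m+1) × Fin (t+1)) => q ((0 : Fin (m+1)), x)) hc
  simp only [Equiv.Perm.mul_apply] at h1
  have htop := ext_pi_top σ hcomm htrans horb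
  -- LHS: ρ^{m+1} (σi (0,x)) = ρ^{m+1} (0, tex x) = (0, gex (tex x))
  rw [ext_tex_eq σ horb i x, ext_rho_pow_eq σ hcomm horb (m+1), htop] at h1
  -- RHS: σi (ρ^{m+1} (0,x)) = σi (0, gex x) = (0, tex (gex x))
  rw [ext_rho_pow_eq σ hcomm horb (m+1), htop, ext_tex_eq σ horb i] at h1
  have h2 := (Prod.mk.injEq _ _ _ _).mp h1 |>.2
  simpa [Equiv.Perm.mul_apply] using h2

end Extract

section Assemble

variable (p m t : ℕ)

def Tset := {τ : Fin p → Equiv.Perm (Fin (t+1)) //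
    (∀ i j, Commute (τ i) (τ j)) ∧
    Nat.card (MulAction.orbitRel.Quotient
      (Subgroup.closure (Set.range τ)) (Fin (t+1))) = 1}

variable {p t}

lemma Tset_trans (τ : Tset p t) :
    ∀ x y : Fin (t+1), ∃ g ∈ closure (Set.range τ.1), g x = y := by
  intro x y
  obtain ⟨g, hy⟩ := (card_orbitQuot_eq_one_iff.mp τ.2.2) x y
  exact ⟨g.1, g.2, hy⟩

lemma Tset_card {τ : Fin p → Equiv.Perm (Fin (t+1))}
    (htr : ∀ x y : Fin (t+1), ∃ g ∈ closure (Set.range τ), g x = y) :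
    Nat.card (MulAction.orbitRel.Quotient
      (Subgroup.closure (Set.range τ)) (Fin (t+1))) = 1 := by
  refine card_orbitQuot_eq_one_iff.mpr fun x y => ?_
  obtain ⟨g, hg, hy⟩ := htr x y
  exact ⟨⟨g, hg⟩, hy⟩

noncomputable def hsel (τ : Tset p t) (c : Fin (t+1)) : Equiv.Perm (Fin (t+1)) :=
  (Tset_trans τ 0 c).choose

lemma hsel_mem (τ : Tset p t) (c : Fin (t+1)) :
    hsel τ c ∈ closure (Set.range τ.1) := (Tset_trans τ 0 c).choose_spec.1

lemma hsel_apply (τ : Tset p t) (c : Fin (t+1)) : hsel τ c 0 = c :=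
  (Tset_trans τ 0 c).choose_spec.2

variable (p t)

def Dset := {e : Equiv.Perm (Fin (m+1)) // e 0 = 0} ×
  (Fin m → Equiv.Perm (Fin (t+1))) × Tset p t × Fin (t+1)

def Mset := {σ : Fin (p+1) → Equiv.Perm (Fin (m+1) × Fin (t+1)) //
    (∀ i j, Commute (σ i) (σ j)) ∧
    (∀ z w : Fin (m+1) × Fin (t+1), ∃ g ∈ closure (Set.range σ), g z = w) ∧
    (∀ z, MulAction.orbit (closure (Set.range fun i : Fin p => σ i.castSucc)) z
      = {w : Fin (m+1) × Fin (t+1) | w.1 = z.1})}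

variable {p m t}

noncomputable def buildM (d : Dset p m t) : Mset p m t :=
  ⟨bsig d.1.1 d.2.1 (hsel d.2.2.1 d.2.2.2) d.2.2.1.1,
   bsig_comm _ _ _ _ d.2.2.1.2.1 (hsel_mem _ _),
   bsig_trans _ _ _ _ (Tset_trans d.2.2.1) d.1.2,
   bsig_orbit _ _ _ _ (Tset_trans d.2.2.1)⟩

lemma symm_zero {e : Equiv.Perm (Fin (m+1))} (he : e 0 = 0) : e.symm 0 = 0 :=
  (Equiv.symm_apply_eq e).2 he.symm

lemma Phi_zero_apply (e : Equiv.Perm (Fin (m+1))) (F : Fin m → Equiv.Perm (Fin (t+1)))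
    (he : e 0 = 0) (g : Equiv.Perm (Fin (t+1))) (x : Fin (t+1)) :
    Phi e F g ((0 : Fin (m+1)), x) = (0, g x) := by
  rw [Phi_apply, symm_zero he]
  simp

theorem buildM_inj : Function.Injective (buildM : Dset p m t → Mset p m t) := by
  rintro ⟨⟨e, he⟩, F, τ, c⟩ ⟨⟨e', he'⟩, F', τ', c'⟩ hEq
  have hfun : bsig e F (hsel τ c) τ.1 = bsig e' F' (hsel τ' c') τ'.1 :=
    congrArg Subtype.val hEq
  have hρ : rho e F (hsel τ c) = rho e' F' (hsel τ' c') := by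
    have := congrFun hfun (Fin.last p)
    rwa [bsig_last, bsig_last] at this
  have hτ : τ = τ' := by
    apply Subtype.ext; funext i; apply Equiv.ext; intro x
    have h1 := congrFun hfun i.castSucc
    rw [bsig_castSucc, bsig_castSucc] at h1
    have h2 := congrArg (fun q : Equiv.Perm (Fin (m+1) × Fin (t+1)) =>
      q ((0 : Fin (m+1)), x)) h1
    rw [Phi_zero_apply e F he, Phi_zero_apply e' F' he'] at h2
    exact (Prod.mk.injEq _ _ _ _).mp h2 |>.2
  have hcG : ∀ k : ℕ, ∀ hk : k ≤ m, ∀ y : Fin (t+1),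
      (e ⟨k, Nat.lt_succ_of_le hk⟩, G0 F ⟨k, Nat.lt_succ_of_le hk⟩ y)
        = (e' ⟨k, Nat.lt_succ_of_le hk⟩, G0 F' ⟨k, Nat.lt_succ_of_le hk⟩ y) := by
    intro k hk y
    rw [← rho_pow e F (hsel τ c) he k hk y, ← rho_pow e' F' (hsel τ' c') he' k hk y, hρ]
  have he2 : e = e' := by
    apply Equiv.ext; intro j
    have := congrArg Prod.fst (hcG j.val (Nat.lt_succ_iff.mp j.isLt) 0)
    simpa [Fin.eta] using this
  have hF : F = F' := by
    funext k
    apply Equiv.ext; intro y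
    have hk1 : k.val + 1 ≤ m := k.isLt
    have := congrArg Prod.snd (hcG (k.val+1) hk1 y)
    simp only at this
    have hsucc : (⟨k.val+1, Nat.lt_succ_of_le hk1⟩ : Fin (m+1)) = Fin.succ k := rfl
    rwa [hsucc, G0_succ, G0_succ] at this
  have hc2 : c = c' := by
    have h1 := congrArg (fun q : Equiv.Perm (Fin (m+1) × Fin (t+1)) =>
      q ((0 : Fin (m+1)), (0 : Fin (t+1)))) (congrArg (· ^ (m+1)) hρ)
    rw [rho_pow_top e F (hsel τ c) he, rho_pow_top e' F' (hsel τ' c') he'] at h1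
    have h2 := (Prod.mk.injEq _ _ _ _).mp h1 |>.2
    rwa [hsel_apply, hsel_apply] at h2
  subst hτ; subst he2; subst hF; subst hc2
  rfl

theorem buildM_surj : Function.Surjective (buildM : Dset p m t → Mset p m t) := by
  rintro ⟨σ, hcomm, htrans, horb⟩
  classical
  set u : Fin (m+1) → Fin (m+1) := fun j => (piFun σ)^[j.val] 0 with hu
  have husurj : Function.Surjective u := ext_u_surj σ hcomm htrans horb
  have hubij : Function.Bijective u :=
    ⟨Finite.injective_iff_surjective.mpr husurj, husurj⟩
  set eE : Equiv.Perm (Fin (m+1)) := Equiv.ofBijective u hubij with heE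
  have heE0 : eE 0 = 0 := rfl
  set τd : Tset p t := ⟨texE σ horb, ext_tex_comm σ hcomm horb,
    Tset_card (ext_tex_trans σ hcomm horb)⟩ with hτd
  set Fex : Fin m → Equiv.Perm (Fin (t+1)) :=
    fun k => gexE σ hcomm horb (k.val+1) with hFex
  set cex : Fin (t+1) := gexE σ hcomm horb (m+1) 0 with hcex
  refine ⟨(⟨eE, heE0⟩, Fex, τd, cex), ?_⟩
  apply Subtype.ext
  show bsig eE Fex (hsel τd cex) (τd.1) = σ
  have hG0 : ∀ j : Fin (m+1), G0 Fex j = gexE σ hcomm horb j.val := by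
    intro j
    induction j using Fin.cases with
    | zero =>
      apply Equiv.ext; intro y
      show y = gexFun σ 0 y
      simp [gexFun]
    | succ k =>
      rw [G0_succ, hFex]
      rfl
  have heEap : ∀ j : Fin (m+1), eE j = (piFun σ)^[j.val] 0 := fun j => rfl
  have hz : ∀ (j : Fin (m+1)) (x : Fin (t+1)),
      ((σ (Fin.last p))^(j.val)) (0, (gexE σ hcomm horb j.val)⁻¹ x) = (eE j, x) := by
    intro j x
    rw [ext_rho_pow_eq σ hcomm horb]
    refine Prod.ext rfl ?_
    exact Equiv.apply_symm_apply (gexE σ hcomm horb j.val) x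
  -- the key return-map identity
  have hkey : hsel τd cex = gexE σ hcomm horb (m+1) := by
    refine perm_eq_of_commute (S := Set.range τd.1) (Tset_trans τd) ?_ ?_ (x₀ := 0) ?_
    · intro g hg
      exact closure_comm
        (by rintro _ ⟨i, rfl⟩ _ ⟨j', rfl⟩; exact τd.2.1 i j')
        (hsel_mem τd cex) hg
    · refine commute_of_closure ?_
      rintro g ⟨i, rfl⟩
      exact ext_gex_comm_tex σ hcomm htrans horb i
    · rw [hsel_apply]
  funext i
  induction i using Fin.lastCases with
  | last =>
    rw [bsig_last]
    apply Equiv.ext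
    rintro ⟨a, x⟩
    rw [rho_apply]
    set j := eE.symm a with hj
    have hja : eE j = a := eE.apply_symm_apply a
    set z := (gexE σ hcomm horb j.val)⁻¹ x with hzdef
    have h1 : σ (Fin.last p) (a, x) = ((σ (Fin.last p))^(j.val + 1)) (0, z) := by
      rw [pow_succ', Equiv.Perm.mul_apply, hz j x, hja]
    rw [h1, ext_rho_pow_eq σ hcomm horb]
    by_cases hlast : j = Fin.last m
    · have hjv : j.val = m := congrArg Fin.val hlast
      refine (Prod.ext ?_ ?_).symm
      · show (piFun σ)^[j.val + 1] 0 = eE (j + 1)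
        rw [hjv, hlast, Fin.last_add_one, heE0]
        exact ext_pi_top σ hcomm htrans horb
      · show gexFun σ (j.val + 1) z = Rmap Fex (hsel τd cex) j x
        rw [Rmap, if_pos hlast, hkey]
        have hlv : j + 1 = 0 := by rw [hlast]; exact Fin.last_add_one m
        rw [hlv]
        simp only [G0_zero, one_mul]
        rw [hG0 j, Equiv.Perm.mul_apply]
        show gexFun σ (j.val + 1) z
          = gexE σ hcomm horb (m+1) ((gexE σ hcomm horb j.val)⁻¹ x)
        rw [hzdef, hjv]
        rfl
    · have hjv : j.val < m := by
        have := j.isLt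
        rcases Nat.lt_or_ge j.val m with h' | h'
        · exact h'
        · exact absurd (Fin.ext (by omega : j.val = m)) hlast
      have hval : (j + 1).val = j.val + 1 := by
        have : j = ⟨j.val, Nat.lt_succ_of_le hjv.le⟩ := Fin.eta j _ |>.symm
        rw [this, fin_add_one_of_lt hjv]
      refine (Prod.ext ?_ ?_).symm
      · show (piFun σ)^[j.val + 1] 0 = eE (j + 1)
        rw [heEap (j+1)]
        show (piFun σ)^[j.val + 1] 0 = (piFun σ)^[(j+1).val] 0
        rw [hval]
      · show gexFun σ (j.val + 1) z = Rmap Fex (hsel τd cex) j x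
        rw [Rmap, if_neg hlast, mul_one]
        rw [hG0 (j+1), hG0 j, hval, Equiv.Perm.mul_apply]
        rfl
  | cast i =>
    rw [bsig_castSucc]
    apply Equiv.ext
    rintro ⟨a, x⟩
    rw [Phi_apply]
    set j := eE.symm a with hj
    have hja : eE j = a := eE.apply_symm_apply a
    set z := (gexE σ hcomm horb j.val)⁻¹ x with hzdef
    have hcp := ((hcomm (Fin.last p) i.castSucc).pow_left j.val).eq
    have h2 : σ i.castSucc (a, x)
        = ((σ (Fin.last p))^(j.val)) (σ i.castSucc ((0 : Fin (m+1)), z)) := by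
      have := congrArg (fun q : Equiv.Perm (Fin (m+1) × Fin (t+1)) =>
        q ((0 : Fin (m+1)), z)) hcp
      simp only [Equiv.Perm.mul_apply] at this
      rw [hz j x] at this
      rw [hja] at this
      exact this.symm
    rw [h2, ext_tex_eq σ horb i z, ext_rho_pow_eq σ hcomm horb]
    refine (Prod.ext ?_ ?_).symm
    · show (piFun σ)^[j.val] 0 = a
      rw [← heEap j, hja]
    · show gexFun σ j.val (texFun σ i z)
        = (G0 Fex j * τd.1 i * (G0 Fex j)⁻¹) x
      rw [hG0 j]
      simp only [Equiv.Perm.mul_apply]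
      rfl

end Assemble

section Count

variable (p m t : ℕ)

lemma card_fixZero : Nat.card {e : Equiv.Perm (Fin (m+1)) // e 0 = 0} = m.factorial := by
  have hiff : ∀ e : Equiv.Perm (Fin (m+1)), e 0 = 0 ↔ (Equiv.Perm.decomposeFin e).1 = 0 := by
    intro e
    have h1 : Equiv.Perm.decomposeFin.symm (Equiv.Perm.decomposeFin e) = e :=
      Equiv.symm_apply_apply _ _
    constructor
    · intro h
      have := Equiv.Perm.decomposeFin_symm_apply_zero
        (Equiv.Perm.decomposeFin e).1 (Equiv.Perm.decomposeFin e).2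
      rw [Prod.mk.eta, h1, h] at this
      exact this.symm
    · intro h
      have := Equiv.Perm.decomposeFin_symm_apply_zero
        (Equiv.Perm.decomposeFin e).1 (Equiv.Perm.decomposeFin e).2
      rw [Prod.mk.eta, h1, h] at this
      exact this
  have e1 : {e : Equiv.Perm (Fin (m+1)) // e 0 = 0}
      ≃ {q : Fin (m+1) × Equiv.Perm (Fin m) // q.1 = 0} :=
    Equiv.subtypeEquiv Equiv.Perm.decomposeFin hiff
  have e2 : {q : Fin (m+1) × Equiv.Perm (Fin m) // q.1 = 0} ≃ Equiv.Perm (Fin m) :=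
    { toFun := fun q => q.1.2
      invFun := fun g => ⟨(0, g), rfl⟩
      left_inv := by rintro ⟨⟨a, g⟩, h⟩; exact Subtype.ext (Prod.ext h.symm rfl)
      right_inv := fun g => rfl }
  rw [Nat.card_congr (e1.trans e2), Nat.card_eq_fintype_card, Fintype.card_perm,
    Fintype.card_fin]

lemma card_Dset :
    Nat.card (Dset p m t)
      = m.factorial * ((t+1).factorial ^ m * (Nat.card (Tset p t) * (t+1))) := by
  rw [Dset, Nat.card_prod, Nat.card_prod, Nat.card_prod, card_fixZero,
    Nat.card_eq_fintype_card (α := Fin m → Equiv.Perm (Fin (t+1))),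
    Fintype.card_fun, Fintype.card_perm, Fintype.card_fin, Fintype.card_fin,
    Nat.card_eq_fintype_card (α := Fin (t+1)), Fintype.card_fin]

lemma card_Mset :
    Nat.card (Mset p m t)
      = m.factorial * ((t+1).factorial ^ m * (Nat.card (Tset p t) * (t+1))) := by
  rw [← card_Dset]
  exact (Nat.card_congr (Equiv.ofBijective buildM ⟨buildM_inj, buildM_surj⟩)).symm

lemma card_Tset : Nat.card (Tset p t) = A p (t+1) 1 := rfl

end Count

end Model

section Transport

variable {β γ : Type*}

lemma map_closure_range {k : ℕ} (ψ : Equiv.Perm β ≃* Equiv.Perm γ)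
    (f : Fin k → Equiv.Perm β) :
    closure (Set.range fun i => ψ (f i))
      = Subgroup.map ψ.toMonoidHom (closure (Set.range f)) := by
  rw [MonoidHom.map_closure]
  congr 1
  ext g
  constructor
  · rintro ⟨i, rfl⟩; exact ⟨f i, ⟨i, rfl⟩, rfl⟩
  · rintro ⟨a, ⟨i, rfl⟩, rfl⟩; exact ⟨i, rfl⟩

lemma orbit_map (E : β ≃ γ) (H : Subgroup (Equiv.Perm β)) (x : β) :
    MulAction.orbit (Subgroup.map (permMulEquiv E).toMonoidHom H) (E x)
      = E '' MulAction.orbit H x := by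
  ext w
  constructor
  · rintro ⟨⟨g', hg'⟩, rfl⟩
    obtain ⟨g, hg, rfl⟩ := hg'
    refine ⟨g x, ⟨⟨g, hg⟩, rfl⟩, ?_⟩
    show E (g x) = E (g (E.symm (E x)))
    rw [Equiv.symm_apply_apply]
  · rintro ⟨y, ⟨⟨g, hg⟩, rfl⟩, rfl⟩
    refine ⟨⟨permMulEquiv E g, ⟨g, hg, rfl⟩⟩, ?_⟩
    show E (g (E.symm (E x))) = E (g x)
    rw [Equiv.symm_apply_apply]

end Transport

end Stmt12Aux

open Stmt12Aux Subgroup Equiv MulAction in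
theorem stmt12 (p n r s : ℕ) (hp : 1 ≤ p) (hn : 1 ≤ n) (hrs : n = r * s)
    (X : Finpartition (Finset.univ : Finset (Fin n)))
    (hr : X.parts.card = r) (hs : ∀ b ∈ X.parts, b.card = s) :
    Nat.card {σ : Fin (p + 1) → Equiv.Perm (Fin n) //
        (∀ i j, Commute (σ i) (σ j)) ∧
        (∀ x y : Fin n, ∃ g ∈ Subgroup.closure (Set.range σ), g x = y) ∧
        (∀ b : Finset (Fin n), b ∈ X.parts ↔
          ∃ x : Fin n, (b : Set (Fin n)) =
            MulAction.orbit (Subgroup.closure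
              (Set.range fun i : Fin p => σ i.castSucc)) x)} =
      A p s 1 * (r - 1).factorial * s.factorial ^ (r - 1) * s := by
  classical
  have hr1 : 1 ≤ r := by
    rcases Nat.eq_zero_or_pos r with h | h
    · subst h; simp at hrs; omega
    · exact h
  have hs1 : 1 ≤ s := by
    rcases Nat.eq_zero_or_pos s with h | h
    · subst h; simp at hrs; omega
    · exact h
  obtain ⟨m, rfl⟩ : ∃ m, r = m + 1 := ⟨r - 1, by omega⟩
  obtain ⟨t, rfl⟩ : ∃ t, s = t + 1 := ⟨s - 1, by omega⟩
  have hcardparts : Fintype.card {b // b ∈ X.parts} = m + 1 := by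
    rw [Fintype.card_coe]; exact hr
  set pe : {b // b ∈ X.parts} ≃ Fin (m+1) := Fintype.equivFinOfCardEq hcardparts with hpe
  have hbcard : ∀ b : {b // b ∈ X.parts}, Fintype.card {x // x ∈ b.1} = t + 1 := fun b => by
    rw [Fintype.card_coe]; exact hs b.1 b.2
  set be : ∀ b : {b // b ∈ X.parts}, {x // x ∈ b.1} ≃ Fin (t+1) :=
    fun b => Fintype.equivFinOfCardEq (hbcard b) with hbe
  set pt : Fin n → {b // b ∈ X.parts} :=
    fun x => ⟨X.part x, X.part_mem.2 (Finset.mem_univ x)⟩ with hpt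
  have hmem : ∀ x : Fin n, x ∈ (pt x).1 := fun x => X.mem_part (Finset.mem_univ x)
  have hpt_eq : ∀ (x : Fin n) (b : {b // b ∈ X.parts}), x ∈ b.1 → pt x = b := by
    intro x b hx
    exact Subtype.ext (X.part_eq_of_mem b.2 hx)
  have be_congr : ∀ {b b' : {b // b ∈ X.parts}} (h : b = b') (x : Fin n)
      (hx : x ∈ b.1) (hx' : x ∈ b'.1), be b ⟨x, hx⟩ = be b' ⟨x, hx'⟩ := by
    rintro b b' rfl x hx hx'; rfl
  set Emap : Fin n → Fin (m+1) × Fin (t+1) :=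
    fun x => (pe (pt x), be (pt x) ⟨x, hmem x⟩) with hEmap
  have hEinj : Function.Injective Emap := by
    intro x x' hEq
    have hb : pt x = pt x' := pe.injective (congrArg Prod.fst hEq)
    have h2 : be (pt x') ⟨x, hb ▸ hmem x⟩ = be (pt x') ⟨x', hmem x'⟩ := by
      rw [← be_congr hb x (hmem x) (hb ▸ hmem x)]
      exact congrArg Prod.snd hEq
    have h3 := (be (pt x')).injective h2
    exact congrArg Subtype.val h3
  have hEsurj : Function.Surjective Emap := by
    rintro ⟨a, y⟩
    set b := pe.symm a with hb
    set xs := (be b).symm y with hxs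
    refine ⟨xs.1, ?_⟩
    have hptb : pt xs.1 = b := hpt_eq xs.1 b xs.2
    refine Prod.ext ?_ ?_
    · show pe (pt xs.1) = a
      rw [hptb, hb, Equiv.apply_symm_apply]
    · show be (pt xs.1) ⟨xs.1, hmem xs.1⟩ = y
      rw [be_congr hptb xs.1 (hmem xs.1) xs.2]
      show be b xs = y
      rw [hxs, Equiv.apply_symm_apply]
  set E : Fin n ≃ Fin (m+1) × Fin (t+1) := Equiv.ofBijective Emap ⟨hEinj, hEsurj⟩ with hE
  have hEap : ∀ x, E x = Emap x := fun x => rfl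
  have hrow : ∀ x : Fin n, E '' ((pt x).1 : Set (Fin n)) = {w | w.1 = pe (pt x)} := by
    intro x
    ext w
    constructor
    · rintro ⟨x', hx', rfl⟩
      show (E x').1 = pe (pt x)
      rw [hEap]
      show pe (pt x') = pe (pt x)
      rw [hpt_eq x' (pt x) hx']
    · intro hw
      rcases w with ⟨a, y⟩
      have ha : a = pe (pt x) := hw
      set xs := (be (pt x)).symm y with hxs
      refine ⟨xs.1, xs.2, ?_⟩
      have hptb : pt xs.1 = pt x := hpt_eq xs.1 (pt x) xs.2
      rw [hEap]
      refine Prod.ext ?_ ?_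
      · show pe (pt xs.1) = a
        rw [hptb, ha]
      · show be (pt xs.1) ⟨xs.1, hmem xs.1⟩ = y
        rw [be_congr hptb xs.1 (hmem xs.1) xs.2]
        show be (pt x) xs = y
        rw [hxs, Equiv.apply_symm_apply]
  set ψ : Equiv.Perm (Fin n) ≃* Equiv.Perm (Fin (m+1) × Fin (t+1)) :=
    permMulEquiv E with hψ
  have key : Nat.card {σ : Fin (p + 1) → Equiv.Perm (Fin n) //
      (∀ i j, Commute (σ i) (σ j)) ∧
      (∀ x y : Fin n, ∃ g ∈ Subgroup.closure (Set.range σ), g x = y) ∧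
      (∀ b : Finset (Fin n), b ∈ X.parts ↔
        ∃ x : Fin n, (b : Set (Fin n)) =
          MulAction.orbit (Subgroup.closure
            (Set.range fun i : Fin p => σ i.castSucc)) x)}
      = Nat.card (Mset p m t) := by
    refine Nat.card_congr (Equiv.subtypeEquiv
      (Equiv.piCongrRight fun _ => ψ.toEquiv) fun σ => ?_)
    show ((∀ i j, Commute (σ i) (σ j)) ∧
        (∀ x y : Fin n, ∃ g ∈ Subgroup.closure (Set.range σ), g x = y) ∧
        (∀ b : Finset (Fin n), b ∈ X.parts ↔
          ∃ x : Fin n, (b : Set (Fin n)) =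
            MulAction.orbit (Subgroup.closure
              (Set.range fun i : Fin p => σ i.castSucc)) x))
      ↔ ((∀ i j, Commute (ψ (σ i)) (ψ (σ j))) ∧
        (∀ z w : Fin (m+1) × Fin (t+1),
          ∃ g ∈ Subgroup.closure (Set.range fun i => ψ (σ i)), g z = w) ∧
        (∀ z, MulAction.orbit (Subgroup.closure
            (Set.range fun i : Fin p => ψ (σ i.castSucc))) z
          = {w : Fin (m+1) × Fin (t+1) | w.1 = z.1}))
    have hmapeq := map_closure_range ψ σ
    have hmap3 := map_closure_range ψ (fun i : Fin p => σ i.castSucc)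
    have horbmap : ∀ x : Fin n,
        MulAction.orbit (closure (Set.range fun i : Fin p => ψ (σ i.castSucc))) (E x)
          = E '' MulAction.orbit
              (closure (Set.range fun i : Fin p => σ i.castSucc)) x := by
      intro x
      rw [hmap3]
      exact orbit_map E _ x
    constructor
    · rintro ⟨h1, h2, h3⟩
      refine ⟨?_, ?_, ?_⟩
      · intro i j
        exact (h1 i j).map ψ
      · intro z w
        obtain ⟨g, hg, hxy⟩ := h2 (E.symm z) (E.symm w)
        refine ⟨ψ g, ?_, ?_⟩
        · rw [hmapeq]; exact ⟨g, hg, rfl⟩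
        · show E (g (E.symm z)) = w
          rw [hxy, Equiv.apply_symm_apply]
      · intro z
        have c1 : ∀ x : Fin n,
            (MulAction.orbit (closure (Set.range fun i : Fin p => σ i.castSucc)) x
              : Set (Fin n)) = ↑((pt x).1) := by
          intro x
          obtain ⟨x₀, hx₀⟩ := (h3 (pt x).1).1 (pt x).2
          have hxmem : x ∈ MulAction.orbit
              (closure (Set.range fun i : Fin p => σ i.castSucc)) x₀ := by
            rw [← hx₀]
            exact Finset.mem_coe.mpr (hmem x)
          have horb_eq := (MulAction.orbit_eq_iff
            (G := closure (Set.range fun i : Fin p => σ i.castSucc))).mpr hxmem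
          rw [horb_eq, ← hx₀]
        have hz : E (E.symm z) = z := E.apply_symm_apply z
        rw [← hz, horbmap, c1, hrow]
        have hfst : (E (E.symm z)).1 = pe (pt (E.symm z)) := rfl
        rw [← hfst, hz]
    · rintro ⟨h1, h2, h3⟩
      have c2 : ∀ x : Fin n,
          (MulAction.orbit (closure (Set.range fun i : Fin p => σ i.castSucc)) x
            : Set (Fin n)) = ↑((pt x).1) := by
        intro x
        have himg : E '' (MulAction.orbit
            (closure (Set.range fun i : Fin p => σ i.castSucc)) x)
            = E '' ↑((pt x).1) := by
          rw [← horbmap, h3 (E x), hrow]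
          have hfst : (E x).1 = pe (pt x) := rfl
          rw [hfst]
        exact Function.Injective.image_injective E.injective himg
      refine ⟨?_, ?_, ?_⟩
      · intro i j
        have := (h1 i j).map ψ.symm
        simpa using this
      · intro x y
        obtain ⟨g', hg', hzw⟩ := h2 (E x) (E y)
        rw [hmapeq] at hg'
        obtain ⟨g, hg, rfl⟩ := hg'
        refine ⟨g, hg, ?_⟩
        have h4 : E (g (E.symm (E x))) = E y := hzw
        rw [Equiv.symm_apply_apply] at h4
        exact E.injective h4
      · intro b
        constructor
        · intro hb
          obtain ⟨x, hx⟩ := X.nonempty_of_mem_parts hb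
          have hbx : pt x = ⟨b, hb⟩ := hpt_eq x ⟨b, hb⟩ hx
          refine ⟨x, ?_⟩
          rw [c2 x, hbx]
        · rintro ⟨x, hbx⟩
          have hco : (b : Set (Fin n)) = ↑((pt x).1) := by rw [hbx, c2 x]
          have hbeq : b = (pt x).1 := Finset.coe_injective hco
          rw [hbeq]; exact (pt x).2
  have hcard := card_Mset p m t
  rw [card_Tset p t] at hcard
  rw [key, hcard]
  simp only [Nat.add_sub_cancel]
  ring
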